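/- Under Conditions G, R₀ and R∞, for each k the function b_{k1}(ρ)Δ(ρ) has at most a finite set of zeros in the closed upper half-plane, all simple; at each such zero, ψ_{kk}(x,·) has either a simple pole or a removable singularity; and for every pole ρ₀ ∈ Z_k^+ there is a constant α_k(ρ₀), independent of x, such that res_{ρ=ρ₀} ψ_{kk}(x,ρ) = α_k(ρ₀) f_k(x,ρ₀) = α_k(ρ₀) e^{iρ₀x}(1 + o(1)) as x → ∞. -/

import Mathlib

open Filter Complex Topology MeasureTheory Asymptotics Matrix

noncomputable section

/-- `y` solves the equation `-y'' + (ν₀/x² + q x) y = λ y` on `(0,∞)`. -/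
def SolvesEq (ν₀ : ℂ) (q : ℝ → ℂ) (lam : ℂ) (y : ℝ → ℂ) : Prop :=
  ∀ x : ℝ, 0 < x → - deriv (deriv y) x + (ν₀ / (x : ℂ) ^ 2 + q x) * y x = lam * y x

/-- The Jost normalization: `y^{(ξ)}(x) = e^{iρx}((iρ)^ξ + o(1))` as `x → ∞`, `ξ = 0,1`. -/
def JostAt (ρ : ℂ) (y : ℝ → ℂ) : Prop :=
  Tendsto (fun x : ℝ => y x * Complex.exp (-(Complex.I * ρ * x))) atTop (𝓝 1) ∧
  Tendsto (fun x : ℝ => deriv y x * Complex.exp (-(Complex.I * ρ * x))) atTop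
    (𝓝 (Complex.I * ρ))

/-- The Wronskian `⟨y,z⟩ = y z' - y' z` at the point `x`. -/
def Wr (y z : ℝ → ℂ) (x : ℝ) : ℂ := y x * deriv z x - deriv y x * z x

/-- Condition (2.2): `∫₀¹ |x^{1−2ν} q(x)| dx + ∫₁^∞ |x q(x)| dx < ∞`. -/
def Cond22 (ν : ℂ) (q : ℝ → ℂ) : Prop :=
  MeasureTheory.IntegrableOn (fun x : ℝ => x ^ (1 - 2 * ν.re) * ‖q x‖) (Set.Ioc 0 1) ∧
  MeasureTheory.IntegrableOn (fun x : ℝ => x * ‖q x‖) (Set.Ioi 1)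

/-- The filter `ρ → ∞` within the closed upper half-plane. -/
def atInfUHP : Filter ℂ := Bornology.cobounded ℂ ⊓ Filter.principal {ρ : ℂ | 0 ≤ ρ.im}

/-- The filter `ρ → 0` within the closed upper half-plane (excluding `0`). -/
def nhdsZeroUHP : Filter ℂ := nhdsWithin 0 {ρ : ℂ | 0 ≤ ρ.im ∧ ρ ≠ 0}

lemma cpow_ne_zero' {ρ : ℂ} (h : ρ ≠ 0) (w : ℂ) : ρ ^ w ≠ 0 := by
  simp [Complex.cpow_eq_zero_iff, h]

lemma cpow_finset_sum {ι : Type*} (t : Finset ι) {ρ : ℂ} (h : ρ ≠ 0) (a : ι → ℂ) :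
    ρ ^ (∑ i ∈ t, a i) = ∏ i ∈ t, ρ ^ a i := by
  classical
  induction t using Finset.induction_on with
  | empty => simp
  | insert _ _ hx ih => rw [Finset.sum_insert hx, Complex.cpow_add _ _ h, ih, Finset.prod_insert hx]

lemma norm_cpow_le' (ρ w : ℂ) (h : ρ ≠ 0) :
    ‖ρ ^ w‖ ≤ ‖ρ‖ ^ w.re * Real.exp (Real.pi * |w.im|) := by
  rw [Complex.norm_cpow_of_ne_zero h, div_eq_mul_inv, ← Real.exp_neg]
  have h1 : -(ρ.arg * w.im) ≤ Real.pi * |w.im| := by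
    calc -(ρ.arg * w.im) ≤ |ρ.arg * w.im| := neg_le_abs _
    _ = |ρ.arg| * |w.im| := abs_mul _ _
    _ ≤ Real.pi * |w.im| := by
        have := Complex.abs_arg_le_pi ρ
        exact mul_le_mul_of_nonneg_right this (abs_nonneg _)
  have h2 : (0:ℝ) ≤ ‖ρ‖ ^ w.re := Real.rpow_nonneg (norm_nonneg ρ) _
  calc ‖ρ‖ ^ w.re * Real.exp (-(ρ.arg * w.im))
      ≤ ‖ρ‖ ^ w.re * Real.exp (Real.pi * |w.im|) := by
        exact mul_le_mul_of_nonneg_left (Real.exp_le_exp.2 h1) h2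
    _ = ‖ρ‖ ^ w.re * Real.exp (Real.pi * |w.im|) := rfl

lemma eventually_ne_zero_atInf : ∀ᶠ ρ : ℂ in atInfUHP, ρ ≠ 0 := by
  have : ∀ᶠ ρ : ℂ in Bornology.cobounded ℂ, (1:ℝ) ≤ ‖ρ‖ :=
    eventually_cobounded_le_norm 1
  refine (this.filter_mono inf_le_left).mono fun ρ h hρ => ?_
  simp [hρ] at h; linarith

lemma tendsto_norm_atInf : Tendsto (fun ρ : ℂ => ‖ρ‖) atInfUHP atTop :=
  tendsto_norm_cobounded_atTop.mono_left inf_le_left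

lemma cpow_tendsto_atInf {w : ℂ} (hw : w.re < 0) :
    Tendsto (fun ρ : ℂ => ρ ^ w) atInfUHP (𝓝 0) := by
  apply squeeze_zero_norm' (a := fun ρ : ℂ => ‖ρ‖ ^ w.re * Real.exp (Real.pi * |w.im|))
  · filter_upwards [eventually_ne_zero_atInf] with ρ h using norm_cpow_le' ρ w h
  · have h1 : Tendsto (fun ρ : ℂ => ‖ρ‖ ^ w.re) atInfUHP (𝓝 0) := by
      have := (tendsto_rpow_neg_atTop (y := -w.re) (by linarith)).comp tendsto_norm_atInf
      simpa [Function.comp_def] using this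
    simpa using h1.mul_const (Real.exp (Real.pi * |w.im|))

lemma eventually_ne_zero_at0 : ∀ᶠ ρ : ℂ in nhdsZeroUHP, ρ ≠ 0 :=
  eventually_mem_nhdsWithin.mono fun ρ h => h.2

lemma tendsto_norm_at0 : Tendsto (fun ρ : ℂ => ‖ρ‖) nhdsZeroUHP (𝓝 0) := by
  have := (continuous_norm.tendsto (0:ℂ)).mono_left (nhdsWithin_le_nhds
    (s := {ρ : ℂ | 0 ≤ ρ.im ∧ ρ ≠ 0}))
  simpa [nhdsZeroUHP] using this

lemma cpow_tendsto_at0 {w : ℂ} (hw : 0 < w.re) :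
    Tendsto (fun ρ : ℂ => ρ ^ w) nhdsZeroUHP (𝓝 0) := by
  apply squeeze_zero_norm' (a := fun ρ : ℂ => ‖ρ‖ ^ w.re * Real.exp (Real.pi * |w.im|))
  · filter_upwards [eventually_ne_zero_at0] with ρ h using norm_cpow_le' ρ w h
  · have h1 : Tendsto (fun ρ : ℂ => ‖ρ‖ ^ w.re) nhdsZeroUHP (𝓝 0) := by
      have hc : ContinuousAt (fun x : ℝ => x ^ w.re) 0 :=
        Real.continuousAt_rpow_const 0 w.re (Or.inr hw.le)
      have := hc.tendsto.comp tendsto_norm_at0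
      simpa [Function.comp_def, Real.zero_rpow hw.ne'] using this
    simpa using h1.mul_const (Real.exp (Real.pi * |w.im|))

lemma tendsto_ratio {b : ℂ → ℂ} {μ c : ℂ}
    (h : (fun ρ : ℂ => b ρ - ρ ^ μ * c) =O[atInfUHP] fun ρ : ℂ => ρ ^ μ / ρ) :
    Tendsto (fun ρ : ℂ => b ρ / ρ ^ μ) atInfUHP (𝓝 c) := by
  have h0 : Tendsto (fun ρ : ℂ => b ρ / ρ ^ μ - c) atInfUHP (𝓝 0) := by
    obtain ⟨C, hC⟩ := h.bound
    apply squeeze_zero_norm' (a := fun ρ : ℂ => C / ‖ρ‖)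
    · filter_upwards [hC, eventually_ne_zero_atInf] with ρ hb hρ
      have hμ : ρ ^ μ ≠ 0 := cpow_ne_zero' hρ μ
      have he : b ρ / ρ ^ μ - c = (b ρ - ρ ^ μ * c) / ρ ^ μ := by field_simp
      rw [he, norm_div]
      have h2 : ‖b ρ - ρ ^ μ * c‖ / ‖ρ ^ μ‖ ≤ C * ‖ρ ^ μ / ρ‖ / ‖ρ ^ μ‖ := by
        gcongr
      refine h2.trans (le_of_eq ?_)
      rw [norm_div]
      have hn1 : ‖ρ ^ μ‖ ≠ 0 := norm_ne_zero_iff.2 hμ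
      have hn2 : ‖ρ‖ ≠ 0 := norm_ne_zero_iff.2 hρ
      field_simp
    · have := (tendsto_norm_atInf.inv_tendsto_atTop).const_mul C
      simpa [div_eq_mul_inv] using this
  have := h0.add_const c
  simpa using this

/-- The star-graph problem `L` of the paper: `p` rays, on ray `R_j` the equation
`−y'' + (ν_{j0}/x² + q_j(x))y = ρ²y` with `ν_{j0} = ν_j² − 1/4`, `Re ν_j > 1/2`,
`ν_j ∉ ℕ`, Condition ν, potentials satisfying (2.2), matching coefficients
`σ_j ≠ 0`, `σ_{j2} ≠ 0`, the solutions `S_{j1}, S_{j2}` (with unit Wronskian), the Jost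
solutions `f_j`, and the Stokes multipliers `b_{j1}, b_{j2}` together with their
Lemma 2.1 asymptotic constants `b^∞_{j1}, b^∞_{j2} ≠ 0` and `b⁰_{j1}, b⁰_{j2}`. -/
structure GraphProblem (p : ℕ) where
  ν : Fin p → ℂ
  σ : Fin p → ℂ
  σ1 : Fin p → ℂ
  σ2 : Fin p → ℂ
  q : Fin p → ℝ → ℂ
  S1 : Fin p → ℝ → ℂ → ℂ
  S2 : Fin p → ℝ → ℂ → ℂ
  f : Fin p → ℝ → ℂ → ℂ
  b1 : Fin p → ℂ → ℂ
  b2 : Fin p → ℂ → ℂ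
  b1inf : Fin p → ℂ
  b2inf : Fin p → ℂ
  b10 : Fin p → ℂ
  b20 : Fin p → ℂ
  hν : ∀ j, 1 / 2 < (ν j).re
  hνnat : ∀ j (n : ℕ), ν j ≠ (n : ℂ)
  hνcond : ∀ j l, ν j ≠ ν l → (ν j).re ≠ (ν l).re
  hσ : ∀ j, σ j ≠ 0
  hσ2 : ∀ j, σ2 j ≠ 0
  hq : ∀ j, Cond22 (ν j) (q j)
  hS1 : ∀ j lam, SolvesEq ((ν j) ^ 2 - 1 / 4) (q j) lam (fun x => S1 j x lam)
  hS2 : ∀ j lam, SolvesEq ((ν j) ^ 2 - 1 / 4) (q j) lam (fun x => S2 j x lam)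
  hWrS : ∀ j lam (x : ℝ), 0 < x →
    Wr (fun t => S1 j t lam) (fun t => S2 j t lam) x = 1
  hf : ∀ j (ρ : ℂ), ρ ≠ 0 → 0 ≤ ρ.im →
    SolvesEq ((ν j) ^ 2 - 1 / 4) (q j) (ρ ^ 2) (fun x => f j x ρ) ∧
      JostAt ρ (fun x => f j x ρ)
  hfan : ∀ j (x : ℝ), 0 < x → DifferentiableOn ℂ (fun ρ => f j x ρ) {ρ : ℂ | 0 < ρ.im}
  hb : ∀ j (ρ : ℂ), ρ ≠ 0 → 0 ≤ ρ.im → ∀ x : ℝ, 0 < x →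
    f j x ρ = b1 j ρ * S1 j x (ρ ^ 2) + b2 j ρ * S2 j x (ρ ^ 2)
  hb1inf : ∀ j, (fun ρ : ℂ => b1 j ρ - ρ ^ ((1 : ℂ) / 2 - ν j) * b1inf j)
      =O[atInfUHP] fun ρ : ℂ => ρ ^ ((1 : ℂ) / 2 - ν j) / ρ
  hb2inf : ∀ j, (fun ρ : ℂ => b2 j ρ - ρ ^ ((1 : ℂ) / 2 + ν j) * b2inf j)
      =O[atInfUHP] fun ρ : ℂ => ρ ^ ((1 : ℂ) / 2 + ν j) / ρ
  hb1inf0 : ∀ j, b1inf j ≠ 0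
  hb2inf0 : ∀ j, b2inf j ≠ 0
  hb10 : ∀ j, Tendsto (fun ρ : ℂ => b1 j ρ / ρ ^ ((1 : ℂ) / 2 - ν j)) nhdsZeroUHP
    (𝓝 (b10 j))
  hb20 : ∀ j, Tendsto (fun ρ : ℂ => b2 j ρ / ρ ^ ((1 : ℂ) / 2 - ν j)) nhdsZeroUHP
    (𝓝 (b20 j))

namespace GraphProblem

variable {p : ℕ}

/-- The characteristic function (3.5):
`Δ(ρ) = Σ_s (σ_{s1} b_{s1}(ρ) + σ_{s2} b_{s2}(ρ)) ∏_{j≠s} σ_j b_{j1}(ρ)`. -/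
def Delta (G : GraphProblem p) (ρ : ℂ) : ℂ :=
  ∑ s : Fin p, (G.σ1 s * G.b1 s ρ + G.σ2 s * G.b2 s ρ) *
    ∏ j ∈ Finset.univ.erase s, (G.σ j * G.b1 j ρ)

/-- `Δ_k(ρ) = σ_k² ∏_{j≠k} σ_j b_{j1}(ρ)` (formula (3.6)). -/
def Deltak (G : GraphProblem p) (k : Fin p) (ρ : ℂ) : ℂ :=
  (G.σ k) ^ 2 * ∏ j ∈ Finset.univ.erase k, (G.σ j * G.b1 j ρ)

/-- `d⁰ = Σ_s (σ_{s1} b⁰_{s1} + σ_{s2} b⁰_{s2}) ∏_{j≠s} σ_j b⁰_{j1}` (Lemma 3.1). -/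
def d0 (G : GraphProblem p) : ℂ :=
  ∑ s : Fin p, (G.σ1 s * G.b10 s + G.σ2 s * G.b20 s) *
    ∏ j ∈ Finset.univ.erase s, (G.σ j * G.b10 j)

open scoped Classical in
/-- `a^∞₁ = Σ_{s ∈ I₁} σ_{s2} b^∞_{s2} ∏_{j≠s} σ_j b^∞_{j1}`, where `I₁` is the group of
rays whose `ν_j` has the largest real part. -/
def aInf1 (G : GraphProblem p) : ℂ :=
  ∑ s : Fin p, if (∀ l, (G.ν l).re ≤ (G.ν s).re) then
    G.σ2 s * G.b2inf s * ∏ j ∈ Finset.univ.erase s, (G.σ j * G.b1inf j) else 0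

/-- Condition G: each `b_{k1}(ρ)Δ(ρ)` has no real zeros (except possibly `ρ = 0`) and no
multiple zeros. -/
def CondG (G : GraphProblem p) : Prop :=
  ∀ k : Fin p, (∀ ρ : ℝ, ρ ≠ 0 → G.b1 k ρ * G.Delta ρ ≠ 0) ∧
    ∀ ρ : ℂ, 0 < ρ.im → G.b1 k ρ * G.Delta ρ = 0 →
      deriv (fun z => G.b1 k z * G.Delta z) ρ ≠ 0

/-- Condition R₀: `b⁰_{j1} ≠ 0` for all `j`, and `d⁰ ≠ 0`. -/
def CondR0 (G : GraphProblem p) : Prop := (∀ j, G.b10 j ≠ 0) ∧ G.d0 ≠ 0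

/-- Condition R∞: `a^∞₁ ≠ 0`. -/
def CondRinf (G : GraphProblem p) : Prop := G.aInf1 ≠ 0

end GraphProblem

namespace GraphProblem
variable {p : ℕ} (G : GraphProblem p)

lemma tendsto_b1_atInf (j : Fin p) :
    Tendsto (fun ρ : ℂ => G.b1 j ρ / ρ ^ ((1:ℂ)/2 - G.ν j)) atInfUHP (𝓝 (G.b1inf j)) :=
  tendsto_ratio (G.hb1inf j)

lemma tendsto_b2_atInf (j : Fin p) :
    Tendsto (fun ρ : ℂ => G.b2 j ρ / ρ ^ ((1:ℂ)/2 + G.ν j)) atInfUHP (𝓝 (G.b2inf j)) :=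
  tendsto_ratio (G.hb2inf j)

lemma eventually_b1_ne_atInf (j : Fin p) : ∀ᶠ ρ in atInfUHP, G.b1 j ρ ≠ 0 := by
  filter_upwards [(G.tendsto_b1_atInf j).eventually_ne (G.hb1inf0 j)] with ρ h hb
  exact h (by rw [hb, zero_div])

lemma eventually_b1_ne_at0 (j : Fin p) (h0 : G.b10 j ≠ 0) :
    ∀ᶠ ρ in nhdsZeroUHP, G.b1 j ρ ≠ 0 := by
  filter_upwards [(G.hb10 j).eventually_ne h0] with ρ h hb
  exact h (by rw [hb, zero_div])

lemma eventually_delta_ne_atInf (k : Fin p) (hRinf : G.CondRinf) :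
    ∀ᶠ ρ in atInfUHP, G.Delta ρ ≠ 0 := by
  classical
  obtain ⟨s₀, -, hs₀⟩ := Finset.exists_max_image Finset.univ (fun s => (G.ν s).re)
    ⟨k, Finset.mem_univ k⟩
  set μ1 : Fin p → ℂ := fun j => (1:ℂ)/2 - G.ν j with hμ1
  set E : ℂ := (∑ j, μ1 j) + 2 * G.ν s₀ with hE
  have halg : ∀ s : Fin p, ∀ ρ : ℂ, ρ ≠ 0 →
      ((G.σ1 s * (G.b1 s ρ / ρ ^ μ1 s) * ρ ^ (-(2 * G.ν s)) +
        G.σ2 s * (G.b2 s ρ / ρ ^ ((1:ℂ)/2 + G.ν s))) *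
       (∏ j ∈ Finset.univ.erase s, (G.σ j * (G.b1 j ρ / ρ ^ μ1 j)))) *
       ρ ^ (2 * G.ν s - 2 * G.ν s₀)
      = ((G.σ1 s * G.b1 s ρ + G.σ2 s * G.b2 s ρ) *
          ∏ j ∈ Finset.univ.erase s, (G.σ j * G.b1 j ρ)) / ρ ^ E := by
    intro s ρ hρ
    set A := G.σ1 s * G.b1 s ρ + G.σ2 s * G.b2 s ρ with hA
    set B := ∏ j ∈ Finset.univ.erase s, (G.σ j * G.b1 j ρ) with hB
    set P : ℂ := ∑ j ∈ Finset.univ.erase s, μ1 j with hP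
    have hμ2 : μ1 s + 2 * G.ν s = (1:ℂ)/2 + G.ν s := by simp only [hμ1]; ring
    have hfac1 : G.σ1 s * (G.b1 s ρ / ρ ^ μ1 s) * ρ ^ (-(2 * G.ν s)) +
        G.σ2 s * (G.b2 s ρ / ρ ^ ((1:ℂ)/2 + G.ν s)) = A / ρ ^ ((1:ℂ)/2 + G.ν s) := by
      rw [Complex.cpow_neg, ← hμ2, Complex.cpow_add _ _ hρ, hA]
      have h1 : ρ ^ μ1 s ≠ 0 := cpow_ne_zero' hρ _
      have h2 : ρ ^ (2 * G.ν s) ≠ 0 := cpow_ne_zero' hρ _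
      field_simp
    have hfac2 : (∏ j ∈ Finset.univ.erase s, (G.σ j * (G.b1 j ρ / ρ ^ μ1 j))) = B / ρ ^ P := by
      rw [hP, cpow_finset_sum _ hρ, hB, ← Finset.prod_div_distrib]
      exact Finset.prod_congr rfl fun j _ => (mul_div_assoc _ _ _).symm
    have hEw : ρ ^ ((1:ℂ)/2 + G.ν s) * ρ ^ P = ρ ^ E * ρ ^ (2 * G.ν s - 2 * G.ν s₀) := by
      rw [← Complex.cpow_add _ _ hρ, ← Complex.cpow_add _ _ hρ]
      congr 1
      have hsplit : (∑ j, μ1 j) = μ1 s + P :=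
        (Finset.add_sum_erase _ _ (Finset.mem_univ s)).symm
      rw [hE, hsplit]
      simp only [hμ1]
      ring
    rw [hfac1, hfac2, div_mul_div_comm, hEw]
    have h1 : ρ ^ E ≠ 0 := cpow_ne_zero' hρ _
    have h2 : ρ ^ (2 * G.ν s - 2 * G.ν s₀) ≠ 0 := cpow_ne_zero' hρ _
    field_simp
    exact mul_inv_cancel_right₀ (cpow_ne_zero' hρ _) _
  have hterm : ∀ s : Fin p,
      Tendsto (fun ρ : ℂ => ((G.σ1 s * G.b1 s ρ + G.σ2 s * G.b2 s ρ) *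
          ∏ j ∈ Finset.univ.erase s, (G.σ j * G.b1 j ρ)) / ρ ^ E) atInfUHP
        (𝓝 (if (∀ l, (G.ν l).re ≤ (G.ν s).re) then
            G.σ2 s * G.b2inf s * ∏ j ∈ Finset.univ.erase s, (G.σ j * G.b1inf j) else 0)) := by
    intro s
    have hsmall : Tendsto (fun ρ : ℂ => ρ ^ (-(2 * G.ν s))) atInfUHP (𝓝 0) := by
      apply cpow_tendsto_atInf
      have := G.hν s
      simp only [Complex.neg_re, Complex.mul_re, Complex.re_ofNat, Complex.im_ofNat]
      linarith
    have t1 := (((G.tendsto_b1_atInf s).const_mul (G.σ1 s)).mul hsmall).add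
      ((G.tendsto_b2_atInf s).const_mul (G.σ2 s))
    have t2 := tendsto_finset_prod (Finset.univ.erase s)
      (fun j _ => (G.tendsto_b1_atInf j).const_mul (G.σ j))
    have heq : (fun ρ : ℂ =>
        ((G.σ1 s * (G.b1 s ρ / ρ ^ μ1 s) * ρ ^ (-(2 * G.ν s)) +
          G.σ2 s * (G.b2 s ρ / ρ ^ ((1:ℂ)/2 + G.ν s))) *
         (∏ j ∈ Finset.univ.erase s, (G.σ j * (G.b1 j ρ / ρ ^ μ1 j)))) *
         ρ ^ (2 * G.ν s - 2 * G.ν s₀)) =ᶠ[atInfUHP]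
        (fun ρ : ℂ => ((G.σ1 s * G.b1 s ρ + G.σ2 s * G.b2 s ρ) *
          ∏ j ∈ Finset.univ.erase s, (G.σ j * G.b1 j ρ)) / ρ ^ E) := by
      filter_upwards [eventually_ne_zero_atInf] with ρ hρ using halg s ρ hρ
    by_cases hs : ∀ l, (G.ν l).re ≤ (G.ν s).re
    · rw [if_pos hs]
      have hseq : G.ν s = G.ν s₀ := by
        by_contra hne
        exact G.hνcond s s₀ hne (le_antisymm (hs₀ s (Finset.mem_univ s)) (hs s₀))
      have t3 : Tendsto (fun ρ : ℂ => ρ ^ (2 * G.ν s - 2 * G.ν s₀)) atInfUHP (𝓝 1) := by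
        simpa [hseq, sub_self, Complex.cpow_zero] using
          (tendsto_const_nhds : Tendsto (fun _ : ℂ => (1:ℂ)) atInfUHP (𝓝 1))
      have := ((t1.mul t2).mul t3).congr' heq
      simpa using this
    · rw [if_neg hs]
      push_neg at hs
      obtain ⟨l, hl⟩ := hs
      have t3 : Tendsto (fun ρ : ℂ => ρ ^ (2 * G.ν s - 2 * G.ν s₀)) atInfUHP (𝓝 0) := by
        apply cpow_tendsto_atInf
        have h2 := hs₀ l (Finset.mem_univ l)
        simp only [Complex.sub_re, Complex.mul_re, Complex.re_ofNat, Complex.im_ofNat]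
        have := (G.ν l).re
        nlinarith [Complex.I_re]
      have := ((t1.mul t2).mul t3).congr' heq
      simpa using this
  have hsum := tendsto_finset_sum (Finset.univ : Finset (Fin p)) (fun s _ => hterm s)
  have hkey : Tendsto (fun ρ : ℂ => G.Delta ρ / ρ ^ E) atInfUHP (𝓝 G.aInf1) := by
    have hfun : (fun ρ : ℂ => G.Delta ρ / ρ ^ E) = fun ρ : ℂ =>
        ∑ s, ((G.σ1 s * G.b1 s ρ + G.σ2 s * G.b2 s ρ) *
          ∏ j ∈ Finset.univ.erase s, (G.σ j * G.b1 j ρ)) / ρ ^ E := by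
      funext ρ
      rw [GraphProblem.Delta, Finset.sum_div]
    rw [hfun]
    convert hsum using 2
    rfl
  have hne := hkey.eventually_ne hRinf
  filter_upwards [hne] with ρ h1 hc
  exact h1 (by rw [hc, zero_div])

lemma eventually_delta_ne_at0 (hR0 : G.CondR0) : ∀ᶠ ρ in nhdsZeroUHP, G.Delta ρ ≠ 0 := by
  classical
  set μ1 : Fin p → ℂ := fun j => (1:ℂ)/2 - G.ν j with hμ1
  set E : ℂ := ∑ j, μ1 j with hE
  have hterm : ∀ s : Fin p,
      Tendsto (fun ρ : ℂ => ((G.σ1 s * G.b1 s ρ + G.σ2 s * G.b2 s ρ) *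
          ∏ j ∈ Finset.univ.erase s, (G.σ j * G.b1 j ρ)) / ρ ^ E) nhdsZeroUHP
        (𝓝 ((G.σ1 s * G.b10 s + G.σ2 s * G.b20 s) *
          ∏ j ∈ Finset.univ.erase s, (G.σ j * G.b10 j))) := by
    intro s
    have t1 := ((G.hb10 s).const_mul (G.σ1 s)).add ((G.hb20 s).const_mul (G.σ2 s))
    have t2 := tendsto_finset_prod (Finset.univ.erase s)
      (fun j _ => (G.hb10 j).const_mul (G.σ j))
    refine (t1.mul t2).congr' ?_
    filter_upwards [eventually_ne_zero_at0] with ρ hρ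
    set A := G.σ1 s * G.b1 s ρ + G.σ2 s * G.b2 s ρ with hA
    set B := ∏ j ∈ Finset.univ.erase s, (G.σ j * G.b1 j ρ) with hB
    set P : ℂ := ∑ j ∈ Finset.univ.erase s, μ1 j with hP
    have hfac1 : G.σ1 s * (G.b1 s ρ / ρ ^ ((1:ℂ)/2 - G.ν s)) +
        G.σ2 s * (G.b2 s ρ / ρ ^ ((1:ℂ)/2 - G.ν s)) = A / ρ ^ μ1 s := by
      rw [← mul_div_assoc, ← mul_div_assoc, ← add_div]
    have hfac2 : (∏ j ∈ Finset.univ.erase s, (G.σ j * (G.b1 j ρ / ρ ^ ((1:ℂ)/2 - G.ν j))))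
        = B / ρ ^ P := by
      rw [hP, cpow_finset_sum _ hρ, hB, ← Finset.prod_div_distrib]
      exact Finset.prod_congr rfl fun j _ => (mul_div_assoc _ _ _).symm
    have hEsplit : ρ ^ μ1 s * ρ ^ P = ρ ^ E := by
      rw [← Complex.cpow_add _ _ hρ, hE]
      congr 1
      exact Finset.add_sum_erase _ _ (Finset.mem_univ s)
    rw [hfac1, hfac2, div_mul_div_comm, hEsplit]
  have hsum := tendsto_finset_sum (Finset.univ : Finset (Fin p)) (fun s _ => hterm s)
  have hkey : Tendsto (fun ρ : ℂ => G.Delta ρ / ρ ^ E) nhdsZeroUHP (𝓝 G.d0) := by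
    have hfun : (fun ρ : ℂ => G.Delta ρ / ρ ^ E) = fun ρ : ℂ =>
        ∑ s, ((G.σ1 s * G.b1 s ρ + G.σ2 s * G.b2 s ρ) *
          ∏ j ∈ Finset.univ.erase s, (G.σ j * G.b1 j ρ)) / ρ ^ E := by
      funext ρ
      rw [GraphProblem.Delta, Finset.sum_div]
    rw [hfun]
    exact hsum
  have hne := hkey.eventually_ne hR0.2
  filter_upwards [hne] with ρ h1 hc
  exact h1 (by rw [hc, zero_div])

end GraphProblem

/-- The Weyl-type solutions `ψ_k = {ψ_{kj}}` of the graph problem, in the form (3.3):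
`ψ_{kj} = γ_{kj} f_j` for `j ≠ k`, `ψ_{kk} = γ_{kk} f_k + (2iρ/b_{k1}) S_{k2}`, where the
coefficients `γ_{kj}, β_k` solve the linear system (3.4) and `γ_{kk}` is given by the
Cramer formula (3.6). -/
structure WeylData {p : ℕ} (G : GraphProblem p) where
  ψ : Fin p → Fin p → ℝ → ℂ → ℂ
  γ : Fin p → Fin p → ℂ → ℂ
  β : Fin p → ℂ → ℂ
  hψj : ∀ k j, j ≠ k → ∀ (x : ℝ) (ρ : ℂ), ψ k j x ρ = γ k j ρ * G.f j x ρ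
  hψk : ∀ k (x : ℝ) (ρ : ℂ),
    ψ k k x ρ = γ k k ρ * G.f k x ρ + (2 * Complex.I * ρ / G.b1 k ρ) * G.S2 k x (ρ ^ 2)
  hsys1 : ∀ k j (ρ : ℂ), ρ ≠ 0 → 0 ≤ ρ.im → G.b1 k ρ * G.Delta ρ ≠ 0 →
    G.σ j * G.b1 j ρ * γ k j ρ + β k ρ = 0
  hsys2 : ∀ k (ρ : ℂ), ρ ≠ 0 → 0 ≤ ρ.im → G.b1 k ρ * G.Delta ρ ≠ 0 →
    ∑ j, (G.σ1 j * G.b1 j ρ + G.σ2 j * G.b2 j ρ) * γ k j ρ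
      = - G.σ2 k * (2 * Complex.I * ρ / G.b1 k ρ)
  hγkk : ∀ k (ρ : ℂ),
    γ k k ρ = (2 * Complex.I * ρ / G.b1 k ρ) * (G.Deltak k ρ / G.Delta ρ)

/-- `h` has no analytic extension to a full neighbourhood of `ρ₀` (i.e. `ρ₀` is a
non-removable singularity). -/
def NotExtendable (h : ℂ → ℂ) (ρ₀ : ℂ) : Prop :=
  ¬ ∃ g : ℂ → ℂ, AnalyticAt ℂ g ρ₀ ∧ ∀ᶠ ρ in 𝓝[≠] ρ₀, g ρ = h ρ

/-- `Z_k^+`: the set of poles of `ψ_{kk}(x,·)` in the open upper half-plane. -/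
def ZplusSet {p : ℕ} {G : GraphProblem p} (W : WeylData G) (k : Fin p) : Set ℂ :=
  {ρ₀ : ℂ | 0 < ρ₀.im ∧ ∃ x : ℝ, 0 < x ∧ NotExtendable (fun ρ => W.ψ k k x ρ) ρ₀}

/-- The matrix `Ψ(x,ρ)` of (4.1): columns `(ψ_{kk}, ψ'_{kk})ᵀ` and `(f_k, f'_k)ᵀ` for
`Im ρ > 0`, and `Ψ(x,ρ) := Ψ(x,−ρ)` for `Im ρ < 0`. -/
def PsiM {p : ℕ} {G : GraphProblem p} (W : WeylData G) (k : Fin p) (x : ℝ) (ρ : ℂ) :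
    Matrix (Fin 2) (Fin 2) ℂ :=
  let ρ' := if 0 ≤ ρ.im then ρ else -ρ
  !![W.ψ k k x ρ', G.f k x ρ';
     deriv (fun t => W.ψ k k t ρ') x, deriv (fun t => G.f k t ρ') x]


section Helpers
variable {p : ℕ} (G : GraphProblem p)

lemma GraphProblem.deltaContOn
    (hbcont : ∀ j, ContinuousOn (G.b1 j) {ρ : ℂ | 0 ≤ ρ.im ∧ ρ ≠ 0} ∧
      ContinuousOn (G.b2 j) {ρ : ℂ | 0 ≤ ρ.im ∧ ρ ≠ 0}) :
    ContinuousOn G.Delta {ρ : ℂ | 0 ≤ ρ.im ∧ ρ ≠ 0} := by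
  apply continuousOn_finset_sum
  intro s _
  exact ((continuousOn_const.mul (hbcont s).1).add (continuousOn_const.mul (hbcont s).2)).mul
    (continuousOn_finset_prod _ fun j _ => continuousOn_const.mul (hbcont j).1)

lemma GraphProblem.deltaDiffOn
    (hban : ∀ j, DifferentiableOn ℂ (G.b1 j) {ρ : ℂ | 0 < ρ.im} ∧
      DifferentiableOn ℂ (G.b2 j) {ρ : ℂ | 0 < ρ.im}) :
    DifferentiableOn ℂ G.Delta {ρ : ℂ | 0 < ρ.im} := by
  apply DifferentiableOn.fun_sum
  intro s _
  exact (((differentiableOn_const _).mul (hban s).1).add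
    ((differentiableOn_const _).mul (hban s).2)).mul
    (DifferentiableOn.fun_finsetProd fun j _ => (differentiableOn_const _).mul (hban j).1)

lemma GraphProblem.deltakDiffOn (k : Fin p)
    (hban : ∀ j, DifferentiableOn ℂ (G.b1 j) {ρ : ℂ | 0 < ρ.im} ∧
      DifferentiableOn ℂ (G.b2 j) {ρ : ℂ | 0 < ρ.im}) :
    DifferentiableOn ℂ (G.Deltak k) {ρ : ℂ | 0 < ρ.im} :=
  (differentiableOn_const _).mul
    (DifferentiableOn.fun_finsetProd fun j _ => (differentiableOn_const _).mul (hban j).1)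

end Helpers

/-- under Conditions G, R₀ and R∞, for each `k` the function `b_{k1}(ρ)Δ(ρ)`
has at most a finite set of zeros in the closed upper half-plane, all simple; at each such
zero `ψ_{kk}(x,·)` has either a simple pole or a removable singularity; and for every pole
`ρ₀ ∈ Z_k^+` there is a constant `α_k(ρ₀)`, independent of `x`, such that
`res_{ρ=ρ₀} ψ_{kk}(x,ρ) = α_k(ρ₀) f_k(x,ρ₀) = α_k(ρ₀) e^{iρ₀x}(1 + o(1))` as `x → ∞`. -/
theorem stmt8 (p : ℕ) (G : GraphProblem p) (W : WeylData G) (k : Fin p)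
    (hG : G.CondG) (hR0 : G.CondR0) (hRinf : G.CondRinf)
    -- analyticity of the Stokes multipliers in the open upper half-plane and
    -- continuity up to the real axis
    (hban : ∀ j, DifferentiableOn ℂ (G.b1 j) {ρ : ℂ | 0 < ρ.im} ∧
      DifferentiableOn ℂ (G.b2 j) {ρ : ℂ | 0 < ρ.im})
    (hbcont : ∀ j, ContinuousOn (G.b1 j) {ρ : ℂ | 0 ≤ ρ.im ∧ ρ ≠ 0} ∧
      ContinuousOn (G.b2 j) {ρ : ℂ | 0 ≤ ρ.im ∧ ρ ≠ 0})
    -- `S_{k2}(x,·)` is entire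
    (hSan : ∀ x : ℝ, 0 < x → Differentiable ℂ (fun lam : ℂ => G.S2 k x lam)) :
    Set.Finite {ρ : ℂ | 0 ≤ ρ.im ∧ ρ ≠ 0 ∧ G.b1 k ρ * G.Delta ρ = 0} ∧
    (∀ ρ₀ : ℂ, 0 < ρ₀.im → G.b1 k ρ₀ * G.Delta ρ₀ = 0 →
      deriv (fun z => G.b1 k z * G.Delta z) ρ₀ ≠ 0 ∧
      (∀ x : ℝ, 0 < x → ∃ g : ℂ → ℂ, AnalyticAt ℂ g ρ₀ ∧
        ∀ᶠ ρ in 𝓝[≠] ρ₀, W.ψ k k x ρ = g ρ / (ρ - ρ₀))) ∧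
    (∀ ρ₀ ∈ ZplusSet W k, ∃ α : ℂ,
      (∀ x : ℝ, 0 < x →
        Tendsto (fun ρ => (ρ - ρ₀) * W.ψ k k x ρ) (𝓝[≠] ρ₀)
          (𝓝 (α * G.f k x ρ₀))) ∧
      Tendsto (fun x : ℝ => α * G.f k x ρ₀ * Complex.exp (-(Complex.I * ρ₀ * x)))
        atTop (𝓝 α)) := by
  classical
  set S : Set ℂ := {ρ : ℂ | 0 ≤ ρ.im ∧ ρ ≠ 0} with hS
  set F : ℂ → ℂ := fun ρ => G.b1 k ρ * G.Delta ρ with hF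
  have hUopen : IsOpen {ρ : ℂ | 0 < ρ.im} := isOpen_lt continuous_const Complex.continuous_im
  have hdΔ : DifferentiableOn ℂ G.Delta {ρ : ℂ | 0 < ρ.im} := G.deltaDiffOn hban
  have hdΔk : DifferentiableOn ℂ (G.Deltak k) {ρ : ℂ | 0 < ρ.im} := G.deltakDiffOn k hban
  have hdF : DifferentiableOn ℂ F {ρ : ℂ | 0 < ρ.im} := by
    rw [hF]; exact ((hban k).1).mul hdΔ
  have hFanal : ∀ ρ₀ : ℂ, 0 < ρ₀.im → AnalyticAt ℂ F ρ₀ :=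
    fun ρ₀ h => hdF.analyticAt (hUopen.mem_nhds h)
  have hNanal : ∀ x : ℝ, 0 < x → ∀ ρ₀ : ℂ, 0 < ρ₀.im →
      AnalyticAt ℂ (fun ρ => 2 * Complex.I * ρ *
        (G.Deltak k ρ * G.f k x ρ + G.Delta ρ * G.S2 k x (ρ ^ 2))) ρ₀ := by
    intro x hx ρ₀ h
    have hd : DifferentiableOn ℂ (fun ρ => 2 * Complex.I * ρ *
        (G.Deltak k ρ * G.f k x ρ + G.Delta ρ * G.S2 k x (ρ ^ 2))) {ρ : ℂ | 0 < ρ.im} :=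
      DifferentiableOn.mul ((differentiable_id.const_mul (2 * Complex.I)).differentiableOn)
        ((hdΔk.mul (G.hfan k x hx)).add
          (hdΔ.mul (((hSan x hx).comp (differentiable_pow 2)).differentiableOn)))
    exact hd.analyticAt (hUopen.mem_nhds h)
  have hrep : ∀ (x : ℝ) (ρ : ℂ), G.b1 k ρ ≠ 0 → G.Delta ρ ≠ 0 →
      W.ψ k k x ρ = 2 * Complex.I * ρ *
        (G.Deltak k ρ * G.f k x ρ + G.Delta ρ * G.S2 k x (ρ ^ 2)) / F ρ := by
    intro x ρ h1 h2
    rw [hF, W.hψk k x ρ, W.hγkk k ρ]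
    field_simp
  have key : ∀ ρ₀ : ℂ, 0 < ρ₀.im → F ρ₀ = 0 → ∀ x : ℝ, 0 < x →
      ∃ g : ℂ → ℂ, AnalyticAt ℂ g ρ₀ ∧
        g ρ₀ = 2 * Complex.I * ρ₀ *
          (G.Deltak k ρ₀ * G.f k x ρ₀ + G.Delta ρ₀ * G.S2 k x (ρ₀ ^ 2)) / deriv F ρ₀ ∧
        ∀ᶠ ρ in 𝓝[≠] ρ₀, W.ψ k k x ρ = g ρ / (ρ - ρ₀) := by
    intro ρ₀ him hF0 x hx
    have hF0' : G.b1 k ρ₀ * G.Delta ρ₀ = 0 := by rw [hF] at hF0; exact hF0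
    have hd : deriv F ρ₀ ≠ 0 := by rw [hF]; exact (hG k).2 ρ₀ him hF0'
    set u : ℂ → ℂ := dslope F ρ₀ with hu
    have huanal : AnalyticAt ℂ u ρ₀ := by
      obtain ⟨pw, hp⟩ := hFanal ρ₀ him
      exact (hp.has_fpower_series_dslope_fslope).analyticAt
    have hu0 : u ρ₀ = deriv F ρ₀ := dslope_same F ρ₀
    have hune : ∀ᶠ ρ in 𝓝 ρ₀, u ρ ≠ 0 :=
      huanal.continuousAt.eventually_ne (by rw [hu0]; exact hd)
    refine ⟨fun ρ => (2 * Complex.I * ρ *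
        (G.Deltak k ρ * G.f k x ρ + G.Delta ρ * G.S2 k x (ρ ^ 2))) / u ρ,
      (hNanal x hx ρ₀ him).div huanal (by rw [hu0]; exact hd), by simp only; rw [hu0], ?_⟩
    filter_upwards [eventually_nhdsWithin_of_eventually_nhds hune, eventually_mem_nhdsWithin]
      with ρ hu1 hρmem
    have hρne : ρ ≠ ρ₀ := hρmem
    have hFρ : F ρ = (ρ - ρ₀) * u ρ := by
      rw [hu, dslope_of_ne F hρne, slope_def_field, hF0, sub_zero, mul_comm,
        div_mul_cancel₀ _ (sub_ne_zero.2 hρne)]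
    have hFne : F ρ ≠ 0 := by
      rw [hFρ]; exact mul_ne_zero (sub_ne_zero.2 hρne) hu1
    have hFne' : G.b1 k ρ * G.Delta ρ ≠ 0 := by rw [hF] at hFne; exact hFne
    rw [hrep x ρ (left_ne_zero_of_mul hFne') (right_ne_zero_of_mul hFne'), hFρ,
      mul_comm (ρ - ρ₀) (u ρ), ← div_div]
  have hFinf : ∀ᶠ ρ in atInfUHP, F ρ ≠ 0 := by
    filter_upwards [G.eventually_b1_ne_atInf k, G.eventually_delta_ne_atInf k hRinf]
      with ρ h1 h2
    rw [hF]; exact mul_ne_zero h1 h2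
  have hF0e : ∀ᶠ ρ in nhdsZeroUHP, F ρ ≠ 0 := by
    filter_upwards [G.eventually_b1_ne_at0 k (hR0.1 k), G.eventually_delta_ne_at0 hR0]
      with ρ h1 h2
    rw [hF]; exact mul_ne_zero h1 h2
  obtain ⟨R, hR⟩ : ∃ R : ℝ, ∀ ρ : ℂ, R ≤ ‖ρ‖ → 0 ≤ ρ.im → F ρ ≠ 0 := by
    rw [atInfUHP, Filter.eventually_inf_principal, ← comap_norm_atTop,
      Filter.eventually_comap, Filter.eventually_atTop] at hFinf
    obtain ⟨R, hR⟩ := hFinf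
    exact ⟨R, fun ρ hρ him => hR ‖ρ‖ hρ ρ rfl him⟩
  obtain ⟨ε, hε, hball⟩ : ∃ ε > 0, ∀ ρ : ℂ, ρ ∈ S → dist ρ 0 < ε → F ρ ≠ 0 := by
    rw [nhdsZeroUHP] at hF0e
    obtain ⟨ε, hε, hsub⟩ := Metric.mem_nhdsWithin_iff.1 hF0e
    exact ⟨ε, hε, fun ρ hρS hρd => hsub ⟨Metric.mem_ball.2 hρd, by rw [hS] at hρS; exact hρS⟩⟩
  set Z : Set ℂ := {ρ : ℂ | 0 ≤ ρ.im ∧ ρ ≠ 0 ∧ F ρ = 0} with hZ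
  have hZS : Z ⊆ S := fun ρ hρ => ⟨hρ.1, hρ.2.1⟩
  have hZsub : Z ⊆ {ρ : ℂ | 0 ≤ ρ.im ∧ ε ≤ ‖ρ‖ ∧ ‖ρ‖ ≤ R} := by
    rintro ρ ⟨h1, h2, h3⟩
    refine ⟨h1, ?_, ?_⟩
    · by_contra hlt
      push_neg at hlt
      exact hball ρ ⟨h1, h2⟩ (by rwa [dist_zero_right]) h3
    · by_contra hlt
      push_neg at hlt
      exact hR ρ hlt.le h1 h3
  have hK : IsCompact {ρ : ℂ | 0 ≤ ρ.im ∧ ε ≤ ‖ρ‖ ∧ ‖ρ‖ ≤ R} := by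
    apply Metric.isCompact_of_isClosed_isBounded
    · have : {ρ : ℂ | 0 ≤ ρ.im ∧ ε ≤ ‖ρ‖ ∧ ‖ρ‖ ≤ R} =
          {ρ : ℂ | 0 ≤ ρ.im} ∩ ({ρ : ℂ | ε ≤ ‖ρ‖} ∩ {ρ : ℂ | ‖ρ‖ ≤ R}) := rfl
      rw [this]
      exact (isClosed_le continuous_const Complex.continuous_im).inter
        ((isClosed_le continuous_const continuous_norm).inter
          (isClosed_le continuous_norm continuous_const))
    · apply (Metric.isBounded_closedBall (x := (0:ℂ)) (r := R)).subset
      intro ρ hρ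
      exact Metric.mem_closedBall.2 (by rw [dist_zero_right]; exact hρ.2.2)
  have hFcont : ContinuousOn F S := by
    rw [hF, hS]; exact ((hbcont k).1.mul (G.deltaContOn hbcont))
  have hfin : Z.Finite := by
    by_contra hinf
    have hinf' : Z.Infinite := hinf
    obtain ⟨z, hzK, hacc⟩ := hinf'.exists_accPt_of_subset_isCompact hK hZsub
    have hz0 : z ≠ 0 := by
      intro h0
      rw [h0] at hzK
      simp only [Set.mem_setOf_eq, norm_zero] at hzK
      linarith [hzK.2.1]
    have hzS : z ∈ S := by rw [hS]; exact ⟨hzK.1, hz0⟩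
    have hL : (𝓝[Z \ {z}] z).NeBot := by
      rw [accPt_principal_iff_clusterPt] at hacc
      exact hacc
    have hFz : F z = 0 := by
      have h1 : Tendsto F (𝓝[Z \ {z}] z) (𝓝 (F z)) :=
        (hFcont z hzS).mono_left (nhdsWithin_mono z (Set.diff_subset.trans hZS))
      have h2 : Tendsto F (𝓝[Z \ {z}] z) (𝓝 0) := by
        refine Tendsto.congr' ?_ tendsto_const_nhds
        filter_upwards [eventually_mem_nhdsWithin] with ρ hρ
        exact (hρ.1.2.2).symm
      exact tendsto_nhds_unique h1 h2
    rcases eq_or_lt_of_le hzK.1 with him | him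
    · have hzre : z = (z.re : ℂ) := by
        apply Complex.ext
        · simp
        · simp [← him]
      have hre0 : z.re ≠ 0 := by
        intro h
        apply hz0
        rw [hzre, h]
        simp
      have hne := (hG k).1 z.re hre0
      apply hne
      rw [← hzre]
      exact hFz
    · have hFa := hFanal z him
      rcases hFa.eventually_eq_zero_or_eventually_ne_zero with hev | hev
      · have hd0 : deriv F z = 0 := by
          have heq : F =ᶠ[𝓝 z] fun _ => (0:ℂ) := hev
          rw [heq.deriv_eq]
          exact deriv_const z 0
        have hF0' : G.b1 k z * G.Delta z = 0 := by rw [hF] at hFz; exact hFz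
        exact (hG k).2 z him hF0' (by rw [← hF]; exact hd0)
      · have h3 : ∀ᶠ ρ in 𝓝[Z \ {z}] z, F ρ ≠ 0 :=
          hev.filter_mono (nhdsWithin_mono z (fun ρ hρ => hρ.2))
        have h4 : ∀ᶠ ρ in 𝓝[Z \ {z}] z, F ρ = 0 := by
          filter_upwards [eventually_mem_nhdsWithin] with ρ hρ
          exact hρ.1.2.2
        obtain ⟨ρ, hρ1, hρ2⟩ := (h3.and h4).exists
        exact hρ1 hρ2
  refine ⟨?_, ?_, ?_⟩
  · exact hfin
  · intro ρ₀ him hprod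
    refine ⟨(hG k).2 ρ₀ him hprod, ?_⟩
    intro x hx
    obtain ⟨g, hg, _, hev⟩ := key ρ₀ him (by rw [hF]; exact hprod) x hx
    exact ⟨g, hg, hev⟩
  · rintro ρ₀ ⟨him, x₀, hx₀, hNE⟩
    have hρ0ne : ρ₀ ≠ 0 := by
      intro h
      rw [h] at him
      simp at him
    have hF0 : F ρ₀ = 0 := by
      by_contra hFne
      apply hNE
      refine ⟨fun ρ => 2 * Complex.I * ρ *
          (G.Deltak k ρ * G.f k x₀ ρ + G.Delta ρ * G.S2 k x₀ (ρ ^ 2)) / F ρ,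
        (hNanal x₀ hx₀ ρ₀ him).div (hFanal ρ₀ him) hFne, ?_⟩
      have hcont : ContinuousAt F ρ₀ :=
        (hdF.differentiableAt (hUopen.mem_nhds him)).continuousAt
      have hev : ∀ᶠ ρ in 𝓝 ρ₀, F ρ ≠ 0 := hcont.eventually_ne hFne
      filter_upwards [eventually_nhdsWithin_of_eventually_nhds hev] with ρ hne
      have hne' : G.b1 k ρ * G.Delta ρ ≠ 0 := by rw [hF] at hne; exact hne
      exact (hrep x₀ ρ (left_ne_zero_of_mul hne') (right_ne_zero_of_mul hne')).symm
    have hd : deriv F ρ₀ ≠ 0 := by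
      rw [hF]
      exact (hG k).2 ρ₀ him (by rw [hF] at hF0; exact hF0)
    refine ⟨2 * Complex.I * ρ₀ * (G.Deltak k ρ₀ + G.Delta ρ₀ / G.b2 k ρ₀) / deriv F ρ₀,
      ?_, ?_⟩
    · intro x hx
      obtain ⟨g, hg, hgval, hev⟩ := key ρ₀ him hF0 x hx
      have hlim : Tendsto g (𝓝[≠] ρ₀) (𝓝 (g ρ₀)) := hg.continuousAt.continuousWithinAt
      have heq : g =ᶠ[𝓝[≠] ρ₀] (fun ρ => (ρ - ρ₀) * W.ψ k k x ρ) := by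
        filter_upwards [hev, eventually_mem_nhdsWithin] with ρ h1 h2
        have hρne : ρ ≠ ρ₀ := h2
        rw [h1, mul_comm, div_mul_cancel₀ _ (sub_ne_zero.2 hρne)]
      have hval : g ρ₀ = 2 * Complex.I * ρ₀ *
          (G.Deltak k ρ₀ + G.Delta ρ₀ / G.b2 k ρ₀) / deriv F ρ₀ * G.f k x ρ₀ := by
        rw [hgval]
        rcases eq_or_ne (G.Delta ρ₀) 0 with hΔ | hΔ
        · rw [hΔ, zero_mul, add_zero, zero_div, add_zero]
          ring
        · have hb1 : G.b1 k ρ₀ = 0 := by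
            rcases mul_eq_zero.1 (by rw [hF] at hF0; exact hF0) with h | h
            · exact h
            · exact absurd h hΔ
          have hb2 : G.b2 k ρ₀ ≠ 0 := by
            intro hb2
            have hjost := (G.hf k ρ₀ hρ0ne him.le).2.1
            have hzero : (fun t : ℝ => G.f k t ρ₀ * Complex.exp (-(Complex.I * ρ₀ * t)))
                =ᶠ[atTop] fun _ => (0:ℂ) := by
              filter_upwards [eventually_gt_atTop (0:ℝ)] with t ht
              rw [G.hb k ρ₀ hρ0ne him.le t ht, hb1, hb2]
              simp
            exact one_ne_zero (tendsto_nhds_unique (hjost.congr' hzero) tendsto_const_nhds)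
          have hS2 : G.S2 k x (ρ₀ ^ 2) = G.f k x ρ₀ / G.b2 k ρ₀ := by
            have hbb := G.hb k ρ₀ hρ0ne him.le x hx
            rw [hb1, zero_mul, zero_add] at hbb
            rw [eq_div_iff hb2, hbb]
            ring
          rw [hS2]
          ring
      have := hlim.congr' heq
      rw [hval] at this
      exact this
    · have hjost := (G.hf k ρ₀ hρ0ne him.le).2.1
      have := hjost.const_mul (2 * Complex.I * ρ₀ *
        (G.Deltak k ρ₀ + G.Delta ρ₀ / G.b2 k ρ₀) / deriv F ρ₀)
      simpa [mul_assoc] using this
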